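/- Let k₀ ∈ ℝ, k₀ ≠ 0, and suppose 1 + 2ik₀ - e^{2ik₀} ≠ 0. Define F(k; z₁, z₂) = (z₁/(4k²))(e^{-2ik} - 1) + (i/(2k)) z₂ + 1. Then the unique pair (z₁, z₂) ∈ ℂ² solving the linear system F(k₀; z₁, z₂) = 0 and (∂F/∂k)(k₀; z₁, z₂) = 0 is z₁ = 4k₀² e^{2ik₀}/(1 + 2ik₀ - e^{2ik₀}) and z₂ = 4ik₀(1 + ik₀ - e^{2ik₀})/(1 + 2ik₀ - e^{2ik₀}). -/

import Mathlib

/-- The unique parameters (z₁, z₂) giving a second-order spectral singularity of the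
two-delta potential at a prescribed real k₀. -/
theorem stmt_17 (k₀ : ℝ) (hk : k₀ ≠ 0)
    (hden : 1 + 2 * Complex.I * k₀ - Complex.exp (2 * Complex.I * k₀) ≠ 0)
    (F : ℂ → ℂ → ℂ → ℂ)
    (hF : ∀ k z₁ z₂, F k z₁ z₂ =
      z₁ / (4 * k ^ 2) * (Complex.exp (-(2 * Complex.I * k)) - 1)
        + Complex.I / (2 * k) * z₂ + 1) :
    ∀ z₁ z₂ : ℂ,
      (F (k₀ : ℂ) z₁ z₂ = 0 ∧ deriv (fun k => F k z₁ z₂) (k₀ : ℂ) = 0) ↔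
      (z₁ = 4 * (k₀ : ℂ) ^ 2 * Complex.exp (2 * Complex.I * k₀) /
          (1 + 2 * Complex.I * k₀ - Complex.exp (2 * Complex.I * k₀)) ∧
       z₂ = 4 * Complex.I * k₀ * (1 + Complex.I * k₀ - Complex.exp (2 * Complex.I * k₀)) /
          (1 + 2 * Complex.I * k₀ - Complex.exp (2 * Complex.I * k₀))) := by
  intro z₁ z₂
  set k : ℂ := (k₀ : ℂ) with hkdef
  set E : ℂ := Complex.exp (2 * Complex.I * k) with hEdef
  have hkc : k ≠ 0 := Complex.ofReal_ne_zero.mpr hk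
  have hE : E ≠ 0 := Complex.exp_ne_zero _
  have hEneg : Complex.exp (-(2*Complex.I*k)) = E⁻¹ := by
    rw [hEdef, ← Complex.exp_neg]
  have h4ne : (4:ℂ)*k^2 ≠ 0 := by simp [hkc]
  have h2ne : (2:ℂ)*k ≠ 0 := by simp [hkc]
  have h0 : HasDerivAt (fun kk : ℂ => -(2*Complex.I*kk)) (-(2*Complex.I)) k := by
    exact (((hasDerivAt_id' k).const_mul (2*Complex.I)).neg).congr_deriv (by ring)
  have hnum : HasDerivAt (fun kk : ℂ => z₁ * (Complex.exp (-(2*Complex.I*kk)) - 1))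
      (z₁ * (Complex.exp (-(2*Complex.I*k)) * -(2*Complex.I))) k := by
    simpa using ((h0.cexp).sub_const 1).const_mul z₁
  have hden4 : HasDerivAt (fun kk : ℂ => 4*kk^2) (8*k) k := by
    have := (hasDerivAt_pow 2 k).const_mul (4:ℂ)
    simpa [pow_one] using this.congr_deriv (by ring)
  have h2k : HasDerivAt (fun kk : ℂ => 2*kk) 2 k := by
    simpa using (hasDerivAt_id k).const_mul (2:ℂ)
  have whole : HasDerivAt (fun kk => F kk z₁ z₂)
      ((z₁ * (Complex.exp (-(2*Complex.I*k)) * -(2*Complex.I)) * (4*k^2)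
          - z₁ * (Complex.exp (-(2*Complex.I*k)) - 1) * (8*k)) / (4*k^2)^2
        + ((0:ℂ) * (2*k) - (Complex.I*z₂) * 2) / (2*k)^2) k := by
    have := ((hnum.div hden4 h4ne).add
      ((hasDerivAt_const k (Complex.I*z₂)).div h2k h2ne)).add_const 1
    refine HasDerivAt.congr_of_eventuallyEq this (Filter.Eventually.of_forall ?_)
    intro kk
    show F kk z₁ z₂ = _
    rw [hF]; simp only [Pi.add_apply, Pi.div_apply]; ring
  have hderiv : deriv (fun kk => F kk z₁ z₂) k =
      (z₁ * (Complex.exp (-(2*Complex.I*k)) * -(2*Complex.I)) * (4*k^2)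
          - z₁ * (Complex.exp (-(2*Complex.I*k)) - 1) * (8*k)) / (4*k^2)^2
        + ((0:ℂ) * (2*k) - (Complex.I*z₂) * 2) / (2*k)^2 := whole.deriv
  rw [hF, hderiv, hEneg]
  constructor
  · rintro ⟨h1, h2⟩
    field_simp at h1 h2
    have hs1 : (16:ℂ)*k^3*E ≠ 0 := by
      simp [hkc, hE]
    have hs2 : (32:ℂ)*k^4*E^2 ≠ 0 := by
      simp [hkc, hE]
    constructor
    · rw [eq_div_iff hden]
      have key : (16*k^3*E) * (z₁ * (1 + 2*Complex.I*k - E)) = (16*k^3*E) * (4*k^2*E) := by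
        linear_combination (-8*k^3*E) * h1 + (-2*k^3*E) * h2
      exact mul_left_cancel₀ hs1 key
    · rw [eq_div_iff hden]
      have key : (32*k^4*E^2) * (z₂ * (1 + 2*Complex.I*k - E)) =
          (32*k^4*E^2) * (4*Complex.I*k*(1+Complex.I*k-E)) := by
        linear_combination (-16*Complex.I*k^3*E*(1+Complex.I*k-E)) * h1
          + (-2*Complex.I*k^3*E*(1-E)) * h2
          + (32*k^4*E^2*z₂*(1+2*Complex.I*k-E)) * Complex.I_sq
      exact mul_left_cancel₀ hs2 key
  · rintro ⟨hz1, hz2⟩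
    rw [hz1, hz2]
    have hden' : 1 + k*2*Complex.I - E ≠ 0 := by convert hden using 2; ring
    constructor
    · field_simp
      linear_combination (4*(1+k*Complex.I-E)) * Complex.I_sq
    · field_simp
      linear_combination (-16*(1+k*Complex.I-E)) * Complex.I_sq
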